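/- Suppose the open set condition holds. Then the Hausdorff dimension of the statistically self-similar set E satisfies dim(E) ≤ s, where s is the unique number such that liminf_{k→∞} ∑_{(j_1,…,j_k) ∈ L^k} (r_{j_1}⋯r_{j_k})^t equals ∞ for t < s and 0 for t > s. -/

import Mathlib

open Metric Filter Set
open scoped ENNReal NNReal

/-- The composition `ψ_{j 0} ∘ ψ_{j 1} ∘ ⋯ ∘ ψ_{j (k-1)}`. -/
noncomputable def iterMap {X : Type*} {m : ℕ} (ψ : Fin m → X → X) :
    (k : ℕ) → (Fin k → Fin m) → X → X
  | 0, _ => id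
  | k + 1, j => ψ (j 0) ∘ iterMap ψ k (fun i => j i.succ)

/-- The index set `L^k = N_1 × ⋯ × N_k`, realized as the finset of functions
`j : Fin k → Fin m` whose `i`-th component lies in `N (i+1)`. -/
def Lk {m : ℕ} (N : ℕ → Finset (Fin m)) (k : ℕ) : Finset (Fin k → Fin m) :=
  Finset.univ.filter fun j => ∀ i : Fin k, j i ∈ N (i + 1)

/-- `ψ^k(F) = ⋃_{(j_1,…,j_k) ∈ L^k} (ψ_{j_1} ∘ ⋯ ∘ ψ_{j_k})(F)`. -/
noncomputable def psiImage {X : Type*} {m : ℕ} (ψ : Fin m → X → X)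
    (N : ℕ → Finset (Fin m)) (k : ℕ) (F : Set X) : Set X :=
  ⋃ j ∈ Lk N k, iterMap ψ k j '' F

lemma iterMap_succ_right' {X : Type*} {m : ℕ} (ψ : Fin m → X → X) :
    ∀ (k : ℕ) (j : Fin (k + 1) → Fin m) (x : X),
      iterMap ψ (k + 1) j x = iterMap ψ k (fun i => j i.castSucc) (ψ (j (Fin.last k)) x) := by
  intro k
  induction k with
  | zero => intro j x; rfl
  | succ k ih =>
    intro j x
    show ψ (j 0) (iterMap ψ (k + 1) (fun i => j i.succ) x) = _
    rw [ih (fun i => j i.succ) x]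
    show ψ (j 0) (iterMap ψ k (fun i => j (i.castSucc.succ)) (ψ (j ((Fin.last k).succ)) x)) = _
    simp only [iterMap, Function.comp_apply, Fin.succ_castSucc, Fin.succ_last, Fin.castSucc_zero]

open MeasureTheory in
/-- Under the open set condition, the Hausdorff dimension of the statistically
self-similar set `E` satisfies `dim E ≤ s`. -/
theorem stmt9 {n m : ℕ}
    (ψ : Fin m → EuclideanSpace ℝ (Fin n) → EuclideanSpace ℝ (Fin n)) (r : Fin m → ℝ)
    (hψ : ∀ j x y, dist (ψ j x) (ψ j y) = r j * dist x y) (hr : ∀ j, r j < 1)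
    (N : ℕ → Finset (Fin m)) (hN : ∀ k, 1 ≤ k → (N k).Nonempty)
    (V : Set (EuclideanSpace ℝ (Fin n))) (hVo : IsOpen V)
    (hVb : Bornology.IsBounded V) (hVne : V.Nonempty)
    (hmap : ∀ j, ψ j '' V ⊆ V)
    (hdisj : ∀ i j, i ≠ j → Disjoint (ψ i '' V) (ψ j '' V))
    (E : Set (EuclideanSpace ℝ (Fin n))) (hE : IsCompact E) (hEne : E.Nonempty)
    (hconv : ∀ F : Set (EuclideanSpace ℝ (Fin n)), IsCompact F → F.Nonempty →
      Tendsto (fun k => hausdorffDist (psiImage ψ N k F) E) atTop (nhds 0))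
    (s : ℝ) (hs0 : 0 ≤ s)
    (hslt : ∀ t : ℝ, 0 ≤ t → t < s →
      liminf (fun k => ∑ j ∈ Lk N k, ENNReal.ofReal ((∏ i, r (j i)) ^ t)) atTop = ⊤)
    (hsgt : ∀ t : ℝ, s < t →
      liminf (fun k => ∑ j ∈ Lk N k, ENNReal.ofReal ((∏ i, r (j i)) ^ t)) atTop = 0) :
    dimH E ≤ ENNReal.ofReal s := by
  classical
  -- trivial case `n = 0`
  rcases Nat.eq_zero_or_pos n with hn | hn
  · subst hn
    haveI : Subsingleton (EuclideanSpace ℝ (Fin 0)) :=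
      ⟨fun a b => by ext i; exact i.elim0⟩
    rw [dimH_subsingleton (Set.subsingleton_of_subsingleton)]
    exact zero_le
  -- nonnegativity of the ratios
  have hx0 : (EuclideanSpace.single (⟨0, hn⟩ : Fin n) (1 : ℝ)) ≠ 0 := by
    intro h
    have := congrArg (fun f : EuclideanSpace ℝ (Fin n) => f ⟨0, hn⟩) h
    simp [EuclideanSpace.single_apply] at this
  have hdistpos : 0 < dist (EuclideanSpace.single (⟨0, hn⟩ : Fin n) (1 : ℝ))
      (0 : EuclideanSpace ℝ (Fin n)) := dist_pos.2 hx0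
  have hr0 : ∀ jj, 0 ≤ r jj := by
    intro jj
    have h1 : (0:ℝ) ≤ r jj * dist (EuclideanSpace.single (⟨0, hn⟩ : Fin n) (1 : ℝ))
        (0 : EuclideanSpace ℝ (Fin n)) := by
      rw [← hψ]; exact dist_nonneg
    exact (mul_nonneg_iff_of_pos_right hdistpos).1 h1
  -- Lipschitz facts
  have lipψ : ∀ jj, LipschitzWith (r jj).toNNReal (ψ jj) := by
    intro jj
    apply LipschitzWith.of_dist_le_mul
    intro x y
    rw [hψ, Real.coe_toNNReal _ (hr0 jj)]
  have lip : ∀ (k : ℕ) (j : Fin k → Fin m),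
      LipschitzWith (∏ i, (r (j i)).toNNReal) (iterMap ψ k j) := by
    intro k
    induction k with
    | zero =>
      intro j
      simpa [iterMap] using (LipschitzWith.id : LipschitzWith 1 (id : EuclideanSpace ℝ (Fin n) → _))
    | succ k ih =>
      intro j
      rw [Fin.prod_univ_succ]
      exact (lipψ (j 0)).comp (ih fun i => j i.succ)
  -- the ambient compact set F
  obtain ⟨v, hv⟩ := hVne
  obtain ⟨c0, hc0⟩ := hE.isBounded.subset_closedBall v
  set c : ℝ := max c0 0 with hcdef
  have hcnn : 0 ≤ c := le_max_right _ _
  set F : Set (EuclideanSpace ℝ (Fin n)) := cthickening c (closure V) with hFdef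
  have hFc : IsCompact F :=
    isCompact_of_isClosed_isBounded isClosed_cthickening (hVb.closure.cthickening)
  have hFne : F.Nonempty := ⟨v, self_subset_cthickening _ (subset_closure hv)⟩
  have hEF : E ⊆ F := by
    intro x hx
    exact mem_cthickening_of_dist_le x v c (closure V) (subset_closure hv)
      ((mem_closedBall.1 (hc0 hx)).trans (le_max_left _ _))
  have hψclV : ∀ jj, ψ jj '' closure V ⊆ closure V := by
    intro jj
    refine (image_closure_subset_closure_image (lipψ jj).continuous).trans ?_
    simpa [closure_closure] using closure_mono (hmap jj)
  have hψF : ∀ jj, ∀ x ∈ F, ψ jj x ∈ F := by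
    intro jj x hx
    rw [hFdef, mem_cthickening_iff] at hx ⊢
    refine le_trans ?_ hx
    have hrfl : infEDist x (closure V) = ⨅ y ∈ closure V, edist x y := rfl
    rw [hrfl]
    refine le_iInf₂ fun y hy => ?_
    refine (EMetric.infEdist_le_edist_of_mem (hψclV jj (mem_image_of_mem _ hy))).trans ?_
    refine ((lipψ jj) x y).trans ?_
    calc ((r jj).toNNReal : ℝ≥0∞) * edist x y ≤ 1 * edist x y := by
          gcongr
          exact_mod_cast Real.toNNReal_le_one.2 (hr jj).le
      _ = edist x y := one_mul _
  have hiterF : ∀ (k : ℕ) (j : Fin k → Fin m), ∀ x ∈ F, iterMap ψ k j x ∈ F := by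
    intro k
    induction k with
    | zero => intro j x hx; exact hx
    | succ k ih =>
      intro j x hx
      exact hψF (j 0) _ (ih (fun i => j i.succ) x hx)
  -- nonemptiness of Lk
  have hLkne : ∀ k : ℕ, ∃ j, j ∈ Lk N k := by
    intro k
    choose f hf using fun i : Fin k => hN ((i : ℕ) + 1) (Nat.le_add_left 1 i)
    exact ⟨f, by simp [Lk, hf]⟩
  have psine : ∀ k, (psiImage ψ N k F).Nonempty := by
    intro k
    obtain ⟨j, hj⟩ := hLkne k
    obtain ⟨x, hx⟩ := hFne
    exact ⟨iterMap ψ k j x, mem_biUnion hj (mem_image_of_mem _ hx)⟩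
  have psisub : ∀ k, psiImage ψ N k F ⊆ F := by
    intro k x hx
    obtain ⟨j, _, y, hy, rfl⟩ := by
      simpa only [psiImage, mem_iUnion, exists_prop, mem_image] using hx
    exact hiterF k j y hy
  have psicomp : ∀ k, IsCompact (psiImage ψ N k F) := by
    intro k
    exact (Lk N k).finite_toSet.isCompact_biUnion fun j _ => hFc.image (lip k j).continuous
  -- antitonicity
  have hanti : ∀ k, psiImage ψ N (k + 1) F ⊆ psiImage ψ N k F := by
    intro k x hx
    obtain ⟨j, hj, y, hy, rfl⟩ := by
      simpa only [psiImage, mem_iUnion, exists_prop, mem_image] using hx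
    have hj' : (fun i : Fin k => j i.castSucc) ∈ Lk N k := by
      simp only [Lk, Finset.mem_filter, Finset.mem_univ, true_and] at hj ⊢
      intro i
      simpa using hj i.castSucc
    refine mem_biUnion hj' ?_
    rw [iterMap_succ_right']
    exact mem_image_of_mem _ (hψF _ _ hy)
  have hmono : Antitone fun k => psiImage ψ N k F :=
    antitone_nat_of_succ_le fun k => hanti k
  -- E is contained in every psiImage
  have hEpsi : ∀ k, E ⊆ psiImage ψ N k F := by
    intro k x hx
    by_contra hxk
    obtain ⟨δ, δpos, hball⟩ :=
      Metric.isOpen_iff.1 (psicomp k).isClosed.isOpen_compl x hxk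
    have hev : ∀ᶠ k' in atTop, hausdorffDist (psiImage ψ N k' F) E < δ := by
      have h := hconv F hFc hFne
      exact h.eventually (gt_mem_nhds δpos)
    obtain ⟨k', hk'1, hk'2⟩ := (hev.and (eventually_ge_atTop k)).exists
    have hsub : psiImage ψ N k' F ⊆ psiImage ψ N k F := hmono hk'2
    have hdge : δ ≤ infDist x (psiImage ψ N k' F) := by
      by_contra hlt
      push_neg at hlt
      obtain ⟨y, hy, hdy⟩ := (Metric.infDist_lt_iff (psine k')).1 hlt
      have : y ∈ ball x δ := by rwa [mem_ball, dist_comm]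
      exact hball this (hsub hy)
    have hfin : EMetric.hausdorffEdist E (psiImage ψ N k' F) ≠ ⊤ :=
      Metric.hausdorffEdist_ne_top_of_nonempty_of_bounded hEne (psine k')
        hE.isBounded ((hFc.isBounded).subset (psisub k'))
    have hle : infDist x (psiImage ψ N k' F) ≤ hausdorffDist (psiImage ψ N k' F) E := by
      rw [Metric.hausdorffDist_comm]
      exact Metric.infDist_le_hausdorffDist_of_mem hx hfin
    linarith
  -- the key vanishing of Hausdorff measure
  have key : ∀ t : ℝ, s < t → μH[t] E = 0 := by
    intro t ht
    have ht0 : 0 < t := lt_of_le_of_lt hs0 ht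
    set ρ : ℝ≥0 := Finset.univ.sup fun jj => (r jj).toNNReal with hρdef
    have hρlt : ρ < 1 := by
      apply Finset.sup_lt_iff (by norm_num : (⊥ : ℝ≥0) < 1) |>.2
      intro jj _
      exact Real.toNNReal_lt_one.2 (hr jj)
    have hD : EMetric.diam F ≠ ⊤ := hFc.isBounded.ediam_ne_top
    have hrb : Tendsto (fun k : ℕ => (ρ : ℝ≥0∞) ^ k * EMetric.diam F) atTop (nhds 0) := by
      have := ENNReal.Tendsto.mul_const
        (ENNReal.tendsto_pow_atTop_nhds_zero_of_lt_one (ENNReal.coe_lt_one_iff.mpr hρlt))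
        (Or.inr hD)
      simpa using this
    have hdiam : ∀ (k : ℕ) (i : ↥(Lk N k)),
        EMetric.diam (iterMap ψ k (i : Fin k → Fin m) '' F) ≤ (ρ : ℝ≥0∞) ^ k * EMetric.diam F := by
      intro k i
      refine ((lip k i).ediam_image_le F).trans ?_
      gcongr
      calc ((∏ l, (r ((i : Fin k → Fin m) l)).toNNReal : ℝ≥0) : ℝ≥0∞)
          ≤ ((ρ ^ k : ℝ≥0) : ℝ≥0∞) := by
            apply ENNReal.coe_le_coe.2
            calc (∏ l, (r ((i : Fin k → Fin m) l)).toNNReal)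
                ≤ ρ ^ (Finset.univ : Finset (Fin k)).card :=
                  Finset.prod_le_pow_card _ _ _ fun l _ =>
                    Finset.le_sup (f := fun jj => (r jj).toNNReal) (Finset.mem_univ _)
              _ = ρ ^ k := by rw [Finset.card_univ, Fintype.card_fin]
        _ = (ρ : ℝ≥0∞) ^ k := by rw [ENNReal.coe_pow]
      exact le_rfl
    have hcov : ∀ k : ℕ, E ⊆ ⋃ i : ↥(Lk N k), iterMap ψ k (i : Fin k → Fin m) '' F := by
      intro k x hx
      obtain ⟨j, hj, hxj⟩ := by
        simpa only [psiImage, mem_iUnion, exists_prop] using hEpsi k hx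
      exact mem_iUnion.2 ⟨⟨j, hj⟩, hxj⟩
    have hμ : μH[t] E ≤ liminf (fun k =>
        ∑ i : ↥(Lk N k), EMetric.diam (iterMap ψ k (i : Fin k → Fin m) '' F) ^ t) atTop :=
      Measure.hausdorffMeasure_le_liminf_sum (ι := fun k => ↥(Lk N k)) t E _ hrb
        (fun k i => iterMap ψ k (i : Fin k → Fin m) '' F)
        (Eventually.of_forall hdiam) (Eventually.of_forall hcov)
    -- bound the sums
    have hsum : ∀ k : ℕ,
        ∑ i : ↥(Lk N k), EMetric.diam (iterMap ψ k (i : Fin k → Fin m) '' F) ^ t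
          ≤ (∑ j ∈ Lk N k, ENNReal.ofReal ((∏ i, r (j i)) ^ t)) * EMetric.diam F ^ t := by
      intro k
      rw [← Finset.sum_coe_sort (Lk N k) (fun j => ENNReal.ofReal ((∏ i, r (j i)) ^ t)),
        Finset.sum_mul]
      refine Finset.sum_le_sum fun i _ => ?_
      have h1 : EMetric.diam (iterMap ψ k (i : Fin k → Fin m) '' F)
          ≤ ((∏ l, (r ((i : Fin k → Fin m) l)).toNNReal : ℝ≥0) : ℝ≥0∞) * EMetric.diam F :=
        (lip k i).ediam_image_le F
      have h2 : ((∏ l, (r ((i : Fin k → Fin m) l)).toNNReal : ℝ≥0) : ℝ≥0∞)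
          = ENNReal.ofReal (∏ l, r ((i : Fin k → Fin m) l)) := by
        rw [ENNReal.ofReal_prod_of_nonneg fun l _ => hr0 _]
        push_cast
        rfl
      calc EMetric.diam (iterMap ψ k (i : Fin k → Fin m) '' F) ^ t
          ≤ (ENNReal.ofReal (∏ l, r ((i : Fin k → Fin m) l)) * EMetric.diam F) ^ t := by
            rw [← h2]; exact ENNReal.rpow_le_rpow h1 ht0.le
        _ = ENNReal.ofReal ((∏ l, r ((i : Fin k → Fin m) l)) ^ t) * EMetric.diam F ^ t := by
            rw [ENNReal.mul_rpow_of_nonneg _ _ ht0.le,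
              ENNReal.ofReal_rpow_of_nonneg (Finset.prod_nonneg fun l _ => hr0 _) ht0.le]
    have hDt : EMetric.diam F ^ t ≠ ⊤ := ENNReal.rpow_ne_top_of_nonneg ht0.le hD
    have hlim0 : liminf (fun k =>
        (∑ j ∈ Lk N k, ENNReal.ofReal ((∏ i, r (j i)) ^ t)) * EMetric.diam F ^ t) atTop = 0 := by
      by_cases hD0 : EMetric.diam F ^ t = 0
      · simp [hD0, liminf_const]
      refine le_antisymm ?_ zero_le
      refine ENNReal.le_of_forall_pos_le_add fun ε' hε' _ => ?_
      rw [zero_add]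
      have hεpos : (0 : ℝ≥0∞) < ε' := by exact_mod_cast hε'
      have hdiv : (0 : ℝ≥0∞) < ε' / EMetric.diam F ^ t :=
        ENNReal.div_pos (ne_of_gt hεpos) hDt
      have hfreq : ∃ᶠ k in atTop,
          (∑ j ∈ Lk N k, ENNReal.ofReal ((∏ i, r (j i)) ^ t)) < ε' / EMetric.diam F ^ t := by
        refine frequently_lt_of_liminf_lt (by isBoundedDefault) ?_
        rw [hsgt t ht]
        exact hdiv
      have hfreq2 : ∃ᶠ k in atTop,
          (∑ j ∈ Lk N k, ENNReal.ofReal ((∏ i, r (j i)) ^ t)) * EMetric.diam F ^ t ≤ ε' := by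
        refine hfreq.mono fun k hk => ?_
        exact (ENNReal.le_div_iff_mul_le (Or.inl hD0) (Or.inl hDt)).1 hk.le
      exact liminf_le_of_frequently_le hfreq2
    have : μH[t] E ≤ 0 := by
      refine hμ.trans ?_
      rw [← hlim0]
      exact liminf_le_liminf (Eventually.of_forall hsum)
    exact le_antisymm this zero_le
  -- conclude
  refine dimH_le fun d' hd' => ?_
  by_contra hcon
  push_neg at hcon
  have hsd : s < (d' : ℝ) := by
    rw [← ENNReal.ofReal_coe_nnreal] at hcon
    exact (ENNReal.ofReal_lt_ofReal_iff_of_nonneg hs0).1 hcon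
  rw [key (d' : ℝ) hsd] at hd'
  exact ENNReal.zero_ne_top hd'
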